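/- For any θ̂ ∈ ℝ and x̂, p̂ ∈ ℝ², the map α ↦ R(θ̂ + α)ᵀ · ((p̂ + α J p̂) − (x̂ + α J x̂)) from ℝ to ℝ² is differentiable at α = 0 with derivative equal to the zero vector. (This cancellation is why the first column of the IEKF observation Jacobian vanishes, making the heading direction unobservable in the IEKF linearized model.) -/

import Mathlib

open Matrix Real

/-- The 2×2 rotation matrix of angle `θ`. -/
noncomputable def Rmat (θ : ℝ) : Matrix (Fin 2) (Fin 2) ℝ :=
  !![Real.cos θ, -Real.sin θ; Real.sin θ, Real.cos θ]

/-- The matrix `J = [[0,-1],[1,0]]`. -/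
def Jmat : Matrix (Fin 2) (Fin 2) ℝ := !![0, -1; 1, 0]


/-- The map
`α ↦ R(θ̂ + α)ᵀ ((p̂ + α J p̂) − (x̂ + α J x̂))` has zero derivative at `α = 0`. -/
theorem statement11 (θh : ℝ) (xh ph : Fin 2 → ℝ) :
    HasDerivAt (fun α : ℝ =>
        (Rmat (θh + α))ᵀ.mulVec ((ph + α • Jmat.mulVec ph) - (xh + α • Jmat.mulVec xh)))
      (0 : Fin 2 → ℝ) 0 := by
  have hθ : HasDerivAt (fun α : ℝ => θh + α) 1 0 := by
    simpa using (hasDerivAt_id (0:ℝ)).const_add θh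
  have hcos : HasDerivAt (fun α : ℝ => Real.cos (θh + α)) (-Real.sin θh) 0 := by
    simpa [Function.comp_def] using (Real.hasDerivAt_cos (θh + 0)).comp 0 hθ
  have hsin : HasDerivAt (fun α : ℝ => Real.sin (θh + α)) (Real.cos θh) 0 := by
    simpa [Function.comp_def] using (Real.hasDerivAt_sin (θh + 0)).comp 0 hθ
  have hlin : ∀ a b : ℝ, HasDerivAt (fun α : ℝ => a + α * b) b 0 := by
    intro a b
    simpa using ((hasDerivAt_id (0:ℝ)).mul_const b).const_add a
  have hlin2 : ∀ a b : ℝ, HasDerivAt (fun α : ℝ => a + -(α * b)) (-b) 0 := by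
    intro a b
    simpa using (((hasDerivAt_id (0:ℝ)).mul_const b).neg).const_add a
  rw [hasDerivAt_pi]
  intro i
  fin_cases i
  · simp only [Pi.zero_apply]
    simp [Rmat, Jmat, Matrix.mulVec, dotProduct, Fin.sum_univ_two, Matrix.vecHead,
      Matrix.vecTail]
    have h := (hcos.mul ((hlin2 (ph 0) (ph 1)).sub (hlin2 (xh 0) (xh 1)))).add
      (hsin.mul ((hlin (ph 1) (ph 0)).sub (hlin (xh 1) (xh 0))))
    convert h using 1
    · funext x
      simp only [Pi.add_apply, Pi.sub_apply, Pi.mul_apply, Pi.neg_apply]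
    · simp only [Pi.sub_apply, add_zero]
      ring
  · simp only [Pi.zero_apply]
    simp [Rmat, Jmat, Matrix.mulVec, dotProduct, Fin.sum_univ_two, Matrix.vecHead,
      Matrix.vecTail]
    have h := ((hsin.mul ((hlin2 (ph 0) (ph 1)).sub (hlin2 (xh 0) (xh 1)))).neg).add
      (hcos.mul ((hlin (ph 1) (ph 0)).sub (hlin (xh 1) (xh 0))))
    convert h using 1
    · funext x
      simp only [Pi.add_apply, Pi.sub_apply, Pi.mul_apply, Pi.neg_apply]
    · simp only [Pi.sub_apply, add_zero]
      ring
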